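/- After K steps of gradient descent with η = 1/γ₁ followed by gradient flow stopped when the train loss equals ε, the population loss satisfies L(δ(T)) ≤ ε · max_{k: γ_k = γ₁}(λ_k/γ_k) + C·c^K for some constant C depending only on λ, δ(0), where c = max_{j: γⱼ≠γ₁}|1-2γⱼ/γ₁|² < 1. -/

import Mathlib

/-- annealed gradient descent (K GD steps with η = 1/γ₁, then
gradient flow stopped at train loss ε) has population loss at most
ε · max_{k:γₖ=γ₁}(λₖ/γₖ) + C·c^K, where c = max_{j:γⱼ≠γ₁}|1-2γⱼ/γ₁|² < 1 and C
depends only on λ and δ(0). -/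
theorem annealed_gd_pop_loss_upper {d : ℕ} [NeZero d]
    (γ lam δ0 : Fin d → ℝ) (γ1 : ℝ)
    (hγ1 : γ1 = Finset.univ.sup' Finset.univ_nonempty γ)
    (hγ : ∀ i, 0 < γ i) (hlam : ∀ i, 0 < lam i)
    (Q : Finset (Fin d)) (hQdef : Q = Finset.univ.filter (fun i => γ i ≠ γ1))
    (hQ : Q.Nonempty)
    (hQc : Qᶜ.Nonempty) :
    ∃ C : ℝ, ∀ ε > (0:ℝ), ∀ K : ℕ, ∀ s ≥ (0:ℝ),
      (∑ i, γ i * ((1 - 2 * (1/γ1) * γ i)^K * δ0 i * Real.exp (-2 * γ i * s))^2)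
          = ε →
      (∑ i, lam i * ((1 - 2 * (1/γ1) * γ i)^K * δ0 i * Real.exp (-2 * γ i * s))^2)
        ≤ ε * Qᶜ.sup' hQc (fun k => lam k / γ k) +
          C * (Q.sup' hQ (fun j => |1 - 2 * γ j / γ1|^2))^K := by
  refine ⟨∑ j ∈ Q, lam j * (δ0 j)^2, ?_⟩
  intro ε hε K s hs heq
  set c := Q.sup' hQ (fun j => |1 - 2 * γ j / γ1|^2) with hc
  set M := Qᶜ.sup' hQc (fun k => lam k / γ k) with hM
  have hM0 : 0 ≤ M := by
    obtain ⟨k, hk⟩ := hQc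
    exact le_trans (div_nonneg (hlam k).le (hγ k).le)
      (Finset.le_sup' (fun k => lam k / γ k) hk)
  have hc0 : 0 ≤ c := by
    obtain ⟨j, hj⟩ := hQ
    exact le_trans (sq_nonneg _) (Finset.le_sup' (fun j => |1 - 2 * γ j / γ1|^2) hj)
  have key : ∀ x : Fin d → ℝ, (∀ j ∈ Q, (x j)^2 ≤ (δ0 j)^2 * c^K) →
      (∑ i, γ i * (x i)^2 = ε) →
      (∑ i, lam i * (x i)^2)
        ≤ ε * M + (∑ j ∈ Q, lam j * (δ0 j)^2) * c^K := by
    intro x hbound hsum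
    have hnn : ∀ i, 0 ≤ γ i * (x i)^2 := fun i => mul_nonneg (hγ i).le (sq_nonneg _)
    rw [← Finset.sum_add_sum_compl Q (fun i => lam i * (x i)^2)]
    have h1 : ∑ i ∈ Q, lam i * (x i)^2 ≤ (∑ j ∈ Q, lam j * (δ0 j)^2) * c^K := by
      rw [Finset.sum_mul]
      apply Finset.sum_le_sum
      intro j hj
      calc lam j * (x j)^2 ≤ lam j * ((δ0 j)^2 * c^K) :=
            mul_le_mul_of_nonneg_left (hbound j hj) (hlam j).le
        _ = lam j * (δ0 j)^2 * c^K := by ring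
    have h2 : ∑ i ∈ Qᶜ, lam i * (x i)^2 ≤ ε * M := by
      have step : ∑ i ∈ Qᶜ, lam i * (x i)^2 ≤ ∑ i ∈ Qᶜ, M * (γ i * (x i)^2) := by
        apply Finset.sum_le_sum
        intro k hk
        have hle : lam k / γ k ≤ M := Finset.le_sup' (fun k => lam k / γ k) hk
        have hγk := (hγ k).ne'
        calc lam k * (x k)^2 = (lam k / γ k) * (γ k * (x k)^2) := by
              field_simp
          _ ≤ M * (γ k * (x k)^2) := mul_le_mul_of_nonneg_right hle (hnn k)
      refine step.trans ?_
      rw [← Finset.mul_sum]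
      have hsub : ∑ i ∈ Qᶜ, γ i * (x i)^2 ≤ ε := by
        rw [← hsum]
        exact Finset.sum_le_sum_of_subset_of_nonneg (Finset.subset_univ _)
          (fun i _ _ => hnn i)
      calc M * ∑ i ∈ Qᶜ, γ i * (x i)^2 ≤ M * ε :=
            mul_le_mul_of_nonneg_left hsub hM0
        _ = ε * M := mul_comm _ _
    linarith
  have hbound : ∀ j ∈ Q,
      ((1 - 2 * (1/γ1) * γ j)^K * δ0 j * Real.exp (-2 * γ j * s))^2
        ≤ (δ0 j)^2 * c^K := by
    intro j hj
    have hrw : ((1 - 2 * (1/γ1) * γ j)^K * δ0 j * Real.exp (-2 * γ j * s))^2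
        = ((1 - 2 * (1/γ1) * γ j)^2)^K * (δ0 j)^2 * (Real.exp (-2 * γ j * s))^2 := by
      rw [mul_pow, mul_pow, ← pow_mul, mul_comm K 2, pow_mul]
    rw [hrw]
    have he : (Real.exp (-2 * γ j * s))^2 ≤ 1 := by
      have h1 : Real.exp (-2 * γ j * s) ≤ 1 :=
        Real.exp_le_one_iff.mpr (by nlinarith [hγ j])
      nlinarith [Real.exp_pos (-2 * γ j * s)]
    have hcle : (1 - 2 * (1/γ1) * γ j)^2 ≤ c := by
      have h := Finset.le_sup' (fun j => |1 - 2 * γ j / γ1|^2) hj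
      calc (1 - 2 * (1/γ1) * γ j)^2 = |1 - 2 * γ j / γ1|^2 := by
            rw [sq_abs]; ring
        _ ≤ c := h
    calc ((1 - 2 * (1/γ1) * γ j)^2)^K * (δ0 j)^2 * (Real.exp (-2 * γ j * s))^2
        ≤ ((1 - 2 * (1/γ1) * γ j)^2)^K * (δ0 j)^2 * 1 :=
          mul_le_mul_of_nonneg_left he
            (mul_nonneg (pow_nonneg (sq_nonneg _) K) (sq_nonneg _))
      _ = ((1 - 2 * (1/γ1) * γ j)^2)^K * (δ0 j)^2 := by ring
      _ ≤ c^K * (δ0 j)^2 :=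
          mul_le_mul_of_nonneg_right (pow_le_pow_left₀ (sq_nonneg _) hcle K) (sq_nonneg _)
      _ = (δ0 j)^2 * c^K := mul_comm _ _
  exact key (fun i => (1 - 2 * (1/γ1) * γ i)^K * δ0 i * Real.exp (-2 * γ i * s))
    hbound heq
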